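/- For n ≥ 16, the rainbow saturation number of P_4 satisfies sat*(n, P_4) ≤ (4/5)n + 16. -/

import Mathlib

open SimpleGraph

/-- A proper edge coloring: edges sharing a vertex get distinct colors. -/
def IsProperEdgeColoring {V : Type*} {α : Type*} (G : SimpleGraph V) (c : Sym2 V → α) : Prop :=
  ∀ e ∈ G.edgeSet, ∀ f ∈ G.edgeSet, e ≠ f → (∃ x, x ∈ e ∧ x ∈ f) → c e ≠ c f

/-- A rainbow copy of `H` in `G` under the coloring `c`: an injective homomorphism whose
edge images receive pairwise distinct colors. -/
def HasRainbowCopy {W V : Type*} {α : Type*} (H : SimpleGraph W) (G : SimpleGraph V)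
    (c : Sym2 V → α) : Prop :=
  ∃ f : H →g G, Function.Injective f ∧
    ∀ e ∈ H.edgeSet, ∀ e' ∈ H.edgeSet, e ≠ e' → c (Sym2.map f e) ≠ c (Sym2.map f e')

/-- The graph `G` with the extra edge `xy`. -/
def addEdge {V : Type*} (G : SimpleGraph V) (x y : V) : SimpleGraph V :=
  G ⊔ SimpleGraph.fromEdgeSet {s(x, y)}

/-- `G` is rainbow `H`-saturated. -/
def RainbowSaturated {V W : Type*} (G : SimpleGraph V) (H : SimpleGraph W) : Prop :=
  (∃ c : Sym2 V → ℕ, IsProperEdgeColoring G c ∧ ¬ HasRainbowCopy H G c) ∧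
  ∀ x y : V, x ≠ y → ¬ G.Adj x y →
    ∀ c : Sym2 V → ℕ, IsProperEdgeColoring (addEdge G x y) c →
      HasRainbowCopy H (addEdge G x y) c

/-- The rainbow saturation number: the least number of edges of an `n`-vertex
rainbow `H`-saturated graph. -/
noncomputable def rainbowSatNum {W : Type*} (n : ℕ) (H : SimpleGraph W) : ℕ :=
  sInf {m | ∃ G : SimpleGraph (Fin n), RainbowSaturated G H ∧ G.edgeSet.ncard = m}

namespace StarAux

/-! ### The center function and the star graph -/

def ctrN (n i : ℕ) : ℕ := if i < 5 * (n / 5) then 5 * (i / 5) else 0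

lemma ctrN_lt {n : ℕ} (hn : 16 ≤ n) (i : ℕ) : ctrN n i < n := by
  unfold ctrN; split <;> omega

lemma ctrN_idem {n : ℕ} (hn : 16 ≤ n) (i : ℕ) : ctrN n (ctrN n i) = ctrN n i := by
  unfold ctrN
  by_cases h : i < 5 * (n / 5)
  · rw [if_pos h]
    have h2 : 5 * (i / 5) < 5 * (n / 5) := by omega
    rw [if_pos h2]; omega
  · rw [if_neg h]
    have h2 : 0 < 5 * (n / 5) := by omega
    rw [if_pos h2]

lemma center_add {n : ℕ} (hn : 16 ≤ n) {a k : ℕ} (hc : ctrN n a = a)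
    (hk1 : 1 ≤ k) (hk4 : k ≤ 4) : a + k < n ∧ ctrN n (a + k) = a := by
  unfold ctrN at hc ⊢
  by_cases h : a < 5 * (n / 5)
  · rw [if_pos h] at hc
    have h2 : a + k < 5 * (n / 5) := by omega
    rw [if_pos h2]
    exact ⟨by omega, by omega⟩
  · rw [if_neg h] at hc; omega

variable {n : ℕ}

def ctr (hn : 16 ≤ n) (i : Fin n) : Fin n := ⟨ctrN n i.val, ctrN_lt hn i.val⟩

lemma ctr_idem (hn : 16 ≤ n) (i : Fin n) : ctr hn (ctr hn i) = ctr hn i :=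
  Fin.val_injective (ctrN_idem hn i.val)

def starG (hn : 16 ≤ n) : SimpleGraph (Fin n) := fromRel (fun u v => ctr hn v = u)

lemma starG_adj (hn : 16 ≤ n) {u v : Fin n} :
    (starG hn).Adj u v ↔ u ≠ v ∧ (ctr hn v = u ∨ ctr hn u = v) :=
  fromRel_adj _ u v

lemma adj_ctr (hn : 16 ≤ n) {u : Fin n} (hu : ctr hn u ≠ u) :
    (starG hn).Adj u (ctr hn u) :=
  (starG_adj hn).mpr ⟨Ne.symm hu, Or.inr rfl⟩

lemma adj_noncenter (hn : 16 ≤ n) {u v : Fin n} (h : (starG hn).Adj u v)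
    (hu : ctr hn u ≠ u) : v = ctr hn u := by
  rcases (starG_adj hn).mp h with ⟨hne, h1 | h2⟩
  · exfalso; apply hu; rw [← h1]; exact ctr_idem hn v
  · exact h2.symm

/-! ### Generic lemmas about `addEdge` and rainbow paths -/

lemma addEdge_comm {V : Type*} (G : SimpleGraph V) (x y : V) :
    addEdge G x y = addEdge G y x := by
  unfold addEdge; rw [Sym2.eq_swap]

lemma addEdge_adj {V : Type*} (G : SimpleGraph V) {x y : V} (h : x ≠ y) :
    (addEdge G x y).Adj x y := by
  rw [addEdge, sup_adj, fromEdgeSet_adj]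
  exact Or.inr ⟨rfl, h⟩

lemma le_addEdge {V : Type*} {G : SimpleGraph V} {u v : V} (x y : V) (h : G.Adj u v) :
    (addEdge G x y).Adj u v := by
  rw [addEdge, sup_adj]
  exact Or.inl h

lemma inj4 {V : Type*} {v0 v1 v2 v3 : V} (d01 : v0 ≠ v1) (d12 : v1 ≠ v2) (d23 : v2 ≠ v3)
    (d02 : v0 ≠ v2) (d03 : v0 ≠ v3) (d13 : v1 ≠ v3) :
    Function.Injective (![v0, v1, v2, v3]) := by
  intro a b hab
  fin_cases a <;> fin_cases b <;> simp_all

lemma pathGraph4_edges : ∀ (a b : Fin 4), a.val + 1 = b.val ∨ b.val + 1 = a.val →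
    s(a, b) = s((0 : Fin 4), 1) ∨ s(a, b) = s((1 : Fin 4), 2) ∨ s(a, b) = s((2 : Fin 4), 3) := by
  decide

lemma rainbow_of_path {V : Type*} {G' : SimpleGraph V} {c : Sym2 V → ℕ}
    (hc : IsProperEdgeColoring G' c) {v0 v1 v2 v3 : V}
    (h01 : G'.Adj v0 v1) (h12 : G'.Adj v1 v2) (h23 : G'.Adj v2 v3)
    (d02 : v0 ≠ v2) (d03 : v0 ≠ v3) (d13 : v1 ≠ v3)
    (hcol : c s(v0, v1) ≠ c s(v2, v3)) :
    HasRainbowCopy (pathGraph 4) G' c := by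
  have d01 := h01.ne
  have d12 := h12.ne
  have d23 := h23.ne
  have e01 : s(v0, v1) ∈ G'.edgeSet := h01
  have e12 : s(v1, v2) ∈ G'.edgeSet := h12
  have e23 : s(v2, v3) ∈ G'.edgeSet := h23
  have ne1 : s(v0, v1) ≠ s(v1, v2) := by
    rw [Ne, Sym2.eq_iff]
    rintro (⟨h, -⟩ | ⟨h, -⟩)
    · exact d01 h
    · exact d02 h
  have ne2 : s(v1, v2) ≠ s(v2, v3) := by
    rw [Ne, Sym2.eq_iff]
    rintro (⟨h, -⟩ | ⟨h, -⟩)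
    · exact d12 h
    · exact d13 h
  have c1 : c s(v0, v1) ≠ c s(v1, v2) := hc _ e01 _ e12 ne1 ⟨v1, by simp, by simp⟩
  have c2 : c s(v1, v2) ≠ c s(v2, v3) := hc _ e12 _ e23 ne2 ⟨v2, by simp, by simp⟩
  refine ⟨⟨![v0, v1, v2, v3], ?_⟩, inj4 d01 d12 d23 d02 d03 d13, ?_⟩
  · intro a b hab
    rw [pathGraph_adj] at hab
    fin_cases a <;> fin_cases b <;>
      simp only [Fin.isValue, Matrix.cons_val_zero, Matrix.cons_val_one, Matrix.head_cons,
        Matrix.cons_val_two, Matrix.tail_cons, Matrix.cons_val_three, Matrix.head_fin_const] at hab ⊢ <;>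
      first
        | omega
        | exact h01 | exact h01.symm | exact h12 | exact h12.symm | exact h23 | exact h23.symm
  · intro e he e' he' hne
    have hE : ∀ e'' ∈ (pathGraph 4).edgeSet,
        e'' = s((0 : Fin 4), 1) ∨ e'' = s((1 : Fin 4), 2) ∨ e'' = s((2 : Fin 4), 3) := by
      intro e'' he''
      induction e'' using Sym2.ind with
      | _ a b =>
        rw [mem_edgeSet, pathGraph_adj] at he''
        exact pathGraph4_edges a b he''
    rcases hE e he with rfl | rfl | rfl <;> rcases hE e' he' with rfl | rfl | rfl <;>
      simp only [Sym2.map_pair_eq, Matrix.cons_val_zero, Matrix.cons_val_one, Matrix.head_cons,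
        Matrix.cons_val_two, Matrix.tail_cons, Matrix.cons_val_three, Matrix.head_fin_const,
        Fin.isValue] <;>
      first
        | exact absurd rfl hne
        | exact c1 | exact c1.symm | exact c2 | exact c2.symm | exact hcol | exact hcol.symm

/-! ### The star graph contains no copy of `P₄` at all -/

lemma no_rainbow (hn : 16 ≤ n) (c : Sym2 (Fin n) → ℕ) :
    ¬ HasRainbowCopy (pathGraph 4) (starG hn) c := by
  rintro ⟨f, hinj, -⟩
  have h01 : (starG hn).Adj (f 0) (f 1) := f.map_adj (by rw [pathGraph_adj]; left; rfl)
  have h12 : (starG hn).Adj (f 1) (f 2) := f.map_adj (by rw [pathGraph_adj]; left; rfl)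
  have h23 : (starG hn).Adj (f 2) (f 3) := f.map_adj (by rw [pathGraph_adj]; left; rfl)
  rcases (starG_adj hn).mp h12 with ⟨hne, hA | hB⟩
  · have hu : ctr hn (f 2) ≠ f 2 := by rw [hA]; exact hne
    have h3 := adj_noncenter hn h23 hu
    rw [hA] at h3
    exact absurd (hinj h3) (by decide)
  · have hu : ctr hn (f 1) ≠ f 1 := by rw [hB]; exact hne.symm
    have h0 := adj_noncenter hn h01.symm hu
    rw [hB] at h0
    exact absurd (hinj h0) (by decide)

/-! ### Saturation: adding any edge forces a rainbow `P₄` -/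

lemma caseA (hn : 16 ≤ n) {x y : Fin n} (hxy : x ≠ y) (hnadj : ¬ (starG hn).Adj x y)
    (hx : ctr hn x ≠ x) (c : Sym2 (Fin n) → ℕ)
    (hc : IsProperEdgeColoring (addEdge (starG hn) x y) c) :
    HasRainbowCopy (pathGraph 4) (addEdge (starG hn) x y) c := by
  classical
  have hxa : (starG hn).Adj x (ctr hn x) := adj_ctr hn hx
  set a : Fin n := ctr hn x with ha
  have hay : a ≠ y := by
    rintro rfl
    exact hnadj hxa
  have hca : ctrN n a.val = a.val := congrArg Fin.val (ctr_idem hn x)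
  obtain ⟨h1n, h1c⟩ := center_add hn hca (by norm_num) (by norm_num : (1:ℕ) ≤ 4)
  obtain ⟨h2n, h2c⟩ := center_add hn hca (by norm_num) (by norm_num : (2:ℕ) ≤ 4)
  obtain ⟨h3n, h3c⟩ := center_add hn hca (by norm_num) (by norm_num : (3:ℕ) ≤ 4)
  obtain ⟨h4n, h4c⟩ := center_add hn hca (by norm_num) (by norm_num : (4:ℕ) ≤ 4)
  set L1 : Fin n := ⟨a.val + 1, h1n⟩ with hL1
  set L2 : Fin n := ⟨a.val + 2, h2n⟩ with hL2
  set L3 : Fin n := ⟨a.val + 3, h3n⟩ with hL3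
  set L4 : Fin n := ⟨a.val + 4, h4n⟩ with hL4
  have hcard4 : ({L1, L2, L3, L4} : Finset (Fin n)).card = 4 := by
    rw [hL1, hL2, hL3, hL4]
    rw [Finset.card_insert_of_notMem (by
        simp only [Finset.mem_insert, Finset.mem_singleton, Fin.mk.injEq]; omega),
      Finset.card_insert_of_notMem (by
        simp only [Finset.mem_insert, Finset.mem_singleton, Fin.mk.injEq]; omega),
      Finset.card_insert_of_notMem (by
        simp only [Finset.mem_singleton, Fin.mk.injEq]; omega),
      Finset.card_singleton]
  have hxy2 : ({x, y} : Finset (Fin n)).card ≤ 2 := by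
    apply le_trans (Finset.card_insert_le _ _)
    simp
  have hSge : 2 ≤ (({L1, L2, L3, L4} : Finset (Fin n)) \ {x, y}).card := by
    have h1 := Finset.card_le_card_sdiff_add_card
      (s := ({L1, L2, L3, L4} : Finset (Fin n))) (t := ({x, y} : Finset (Fin n)))
    omega
  obtain ⟨b, hb, b', hb', hbb'⟩ := Finset.one_lt_card.mp
    (show 1 < (({L1, L2, L3, L4} : Finset (Fin n)) \ {x, y}).card by omega)
  have hquad : ∀ v ∈ ({L1, L2, L3, L4} : Finset (Fin n)), ctr hn v = a ∧ v ≠ a := by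
    intro v hv
    simp only [Finset.mem_insert, Finset.mem_singleton] at hv
    rcases hv with rfl | rfl | rfl | rfl
    · exact ⟨Fin.val_injective h1c, Fin.ne_of_val_ne (by simp [hL1])⟩
    · exact ⟨Fin.val_injective h2c, Fin.ne_of_val_ne (by simp [hL2])⟩
    · exact ⟨Fin.val_injective h3c, Fin.ne_of_val_ne (by simp [hL3])⟩
    · exact ⟨Fin.val_injective h4c, Fin.ne_of_val_ne (by simp [hL4])⟩
  obtain ⟨hbQ, hbxy⟩ := Finset.mem_sdiff.mp hb
  obtain ⟨hb'Q, hb'xy⟩ := Finset.mem_sdiff.mp hb'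
  simp only [Finset.mem_insert, Finset.mem_singleton, not_or] at hbxy hb'xy
  obtain ⟨hbc, hba⟩ := hquad b hbQ
  obtain ⟨hb'c, hb'a⟩ := hquad b' hb'Q
  have hab : (starG hn).Adj a b := (starG_adj hn).mpr ⟨Ne.symm hba, Or.inl hbc⟩
  have hab' : (starG hn).Adj a b' := (starG_adj hn).mpr ⟨Ne.symm hb'a, Or.inl hb'c⟩
  have hyx' : (addEdge (starG hn) x y).Adj y x := (addEdge_adj _ hxy).symm
  have hxa' : (addEdge (starG hn) x y).Adj x a := le_addEdge x y hxa
  have hab2 : (addEdge (starG hn) x y).Adj a b := le_addEdge x y hab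
  have hab2' : (addEdge (starG hn) x y).Adj a b' := le_addEdge x y hab'
  have nebb : s(a, b) ≠ s(a, b') := by
    rw [Ne, Sym2.eq_iff]
    rintro (⟨-, h⟩ | ⟨h, h'⟩)
    · exact hbb' h
    · exact hba (h'.symm ▸ h ▸ rfl : b = a)
  have key : c s(a, b) ≠ c s(a, b') :=
    hc _ hab2 _ hab2' nebb ⟨a, by simp, by simp⟩
  by_cases hcy : c s(y, x) = c s(a, b)
  · exact rainbow_of_path hc hyx' hxa' hab2' (Ne.symm hay) (Ne.symm hb'xy.2) (Ne.symm hb'xy.1)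
      (by rw [hcy]; exact key)
  · exact rainbow_of_path hc hyx' hxa' hab2 (Ne.symm hay) (Ne.symm hbxy.2) (Ne.symm hbxy.1) hcy

lemma caseB (hn : 16 ≤ n) {x y : Fin n} (hxy : x ≠ y) (hx : ctr hn x = x)
    (hy : ctr hn y = y) (c : Sym2 (Fin n) → ℕ)
    (hc : IsProperEdgeColoring (addEdge (starG hn) x y) c) :
    HasRainbowCopy (pathGraph 4) (addEdge (starG hn) x y) c := by
  obtain ⟨h1n, h1c⟩ := center_add hn (congrArg Fin.val hx) (by norm_num) (by norm_num : (1:ℕ) ≤ 4)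
  obtain ⟨h2n, h2c⟩ := center_add hn (congrArg Fin.val hx) (by norm_num) (by norm_num : (2:ℕ) ≤ 4)
  obtain ⟨g1n, g1c⟩ := center_add hn (congrArg Fin.val hy) (by norm_num) (by norm_num : (1:ℕ) ≤ 4)
  set x1 : Fin n := ⟨x.val + 1, h1n⟩ with hx1
  set x2 : Fin n := ⟨x.val + 2, h2n⟩ with hx2
  set y1 : Fin n := ⟨y.val + 1, g1n⟩ with hy1
  have hcx1 : ctr hn x1 = x := Fin.val_injective h1c
  have hcx2 : ctr hn x2 = x := Fin.val_injective h2c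
  have hcy1 : ctr hn y1 = y := Fin.val_injective g1c
  have hx1x : x1 ≠ x := Fin.ne_of_val_ne (by simp [hx1])
  have hx2x : x2 ≠ x := Fin.ne_of_val_ne (by simp [hx2])
  have hy1y : y1 ≠ y := Fin.ne_of_val_ne (by simp [hy1])
  have hx1y : x1 ≠ y := fun h => hxy (by rw [← hcx1, h, hy])
  have hx2y : x2 ≠ y := fun h => hxy (by rw [← hcx2, h, hy])
  have hy1x : y1 ≠ x := fun h => hxy (by rw [← hx, ← h, hcy1])
  have hx1y1 : x1 ≠ y1 := fun h => hxy (by rw [← hcx1, h, hcy1])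
  have hx2y1 : x2 ≠ y1 := fun h => hxy (by rw [← hcx2, h, hcy1])
  have ha1 : (starG hn).Adj x1 x := (starG_adj hn).mpr ⟨hx1x, Or.inr hcx1⟩
  have ha2 : (starG hn).Adj x2 x := (starG_adj hn).mpr ⟨hx2x, Or.inr hcx2⟩
  have ha3 : (starG hn).Adj y y1 := (starG_adj hn).mpr ⟨Ne.symm hy1y, Or.inl hcy1⟩
  have hb1 : (addEdge (starG hn) x y).Adj x1 x := le_addEdge x y ha1
  have hb2 : (addEdge (starG hn) x y).Adj x2 x := le_addEdge x y ha2
  have hb3 : (addEdge (starG hn) x y).Adj y y1 := le_addEdge x y ha3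
  have hbxy : (addEdge (starG hn) x y).Adj x y := addEdge_adj _ hxy
  have ne12 : s(x1, x) ≠ s(x2, x) := by
    rw [Ne, Sym2.eq_iff]
    rintro (⟨h, -⟩ | ⟨h, -⟩)
    · exact Fin.ne_of_val_ne (by simp [hx1, hx2] : x1.val ≠ x2.val) h
    · exact hx1x h
  have cc : c s(x1, x) ≠ c s(x2, x) := hc _ hb1 _ hb2 ne12 ⟨x, by simp, by simp⟩
  by_cases h : c s(x1, x) = c s(y, y1)
  · exact rainbow_of_path hc hb2 hbxy hb3 hx2y hx2y1 (Ne.symm hy1x)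
      (fun hh => cc (by rw [h, ← hh]))
  · exact rainbow_of_path hc hb1 hbxy hb3 hx1y hx1y1 (Ne.symm hy1x) h

lemma star_saturated (hn : 16 ≤ n) : RainbowSaturated (starG hn) (pathGraph 4) := by
  constructor
  · obtain ⟨cInj, hcInj⟩ := Countable.exists_injective_nat (Sym2 (Fin n))
    exact ⟨cInj, fun e _ f _ hef _ h => hef (hcInj h), no_rainbow hn cInj⟩
  · intro x y hxy hnadj c hc
    by_cases hx : ctr hn x = x
    · by_cases hy : ctr hn y = y
      · exact caseB hn hxy hx hy c hc
      · rw [addEdge_comm] at hc ⊢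
        exact caseA hn hxy.symm (fun h => hnadj h.symm) hy c hc
    · exact caseA hn hxy hnadj hx c hc

/-! ### Edge count -/

lemma card_bound (hn : 16 ≤ n) : (starG hn).edgeSet.ncard ≤ n - n / 5 := by
  classical
  rw [← coe_edgeFinset, Set.ncard_coe_finset]
  have h2 : (starG hn).edgeFinset.card ≤
      (Finset.univ.filter (fun v : Fin n => ctr hn v ≠ v)).card := by
    apply Finset.card_le_card_of_surjOn (fun v => s(v, ctr hn v))
    intro e he
    induction e using Sym2.ind with
    | _ u v =>
      rw [Finset.mem_coe, mem_edgeFinset, mem_edgeSet, starG_adj] at he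
      rcases he with ⟨hne, h | h⟩
      · refine ⟨v, ?_, ?_⟩
        · simp only [Finset.coe_filter, Finset.mem_univ, true_and, Set.mem_setOf_eq]
          rw [h]; exact hne
        · show s(v, ctr hn v) = s(u, v)
          rw [h, Sym2.eq_swap]
      · refine ⟨u, ?_, ?_⟩
        · simp only [Finset.coe_filter, Finset.mem_univ, true_and, Set.mem_setOf_eq]
          rw [h]; exact hne.symm
        · show s(u, ctr hn u) = s(u, v)
          rw [h]
  have h3 : (Finset.univ.filter (fun v : Fin n => ctr hn v = v)).card +
      (Finset.univ.filter (fun v : Fin n => ctr hn v ≠ v)).card = n := by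
    rw [Finset.card_filter_add_card_filter_not]
    simp
  have h4 : n / 5 ≤ (Finset.univ.filter (fun v : Fin n => ctr hn v = v)).card := by
    have h5 : (Finset.univ : Finset (Fin (n / 5))).card ≤
        (Finset.univ.filter (fun v : Fin n => ctr hn v = v)).card := by
      apply Finset.card_le_card_of_injOn
        (fun j : Fin (n / 5) => (⟨5 * j.val, by have := j.isLt; omega⟩ : Fin n))
      · intro j _
        simp only [Finset.coe_filter, Finset.mem_filter, Finset.mem_univ, true_and, Set.mem_setOf_eq]
        apply Fin.val_injective
        show ctrN n (5 * j.val) = 5 * j.val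
        unfold ctrN
        have hj := j.isLt
        have hlt : 5 * j.val < 5 * (n / 5) := by omega
        rw [if_pos hlt]; omega
      · intro p _ q _ hpq
        have : 5 * p.val = 5 * q.val := congrArg Fin.val hpq
        exact Fin.val_injective (by omega)
    simpa using h5
  omega

end StarAux

open StarAux in
theorem stmt8 (n : ℕ) (hn : 16 ≤ n) :
    (rainbowSatNum n (pathGraph 4) : ℝ) ≤ 4 / 5 * n + 16 := by
  have hmem : (starG hn).edgeSet.ncard ∈
      {m | ∃ G : SimpleGraph (Fin n), RainbowSaturated G (pathGraph 4) ∧ G.edgeSet.ncard = m} :=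
    ⟨starG hn, star_saturated hn, rfl⟩
  have h1 : rainbowSatNum n (pathGraph 4) ≤ (starG hn).edgeSet.ncard := Nat.sInf_le hmem
  have h3 : rainbowSatNum n (pathGraph 4) ≤ n - n / 5 := le_trans h1 (card_bound hn)
  have h5 : n / 5 ≤ n := Nat.div_le_self _ _
  have h6 : n ≤ 5 * (n / 5) + 4 := by omega
  have h6' : (n : ℝ) ≤ 5 * ((n / 5 : ℕ) : ℝ) + 4 := by exact_mod_cast h6
  calc (rainbowSatNum n (pathGraph 4) : ℝ) ≤ ((n - n / 5 : ℕ) : ℝ) := by exact_mod_cast h3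
    _ = (n : ℝ) - ((n / 5 : ℕ) : ℝ) := by rw [Nat.cast_sub h5]
    _ ≤ 4 / 5 * n + 16 := by linarith
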